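/- Let ρ and ι be permutations of a finite set D with ι a fixed-point-free involution. If the group generated by ρ and ι acts transitively on D, then the combinatorial map (D, ρ, ι) encodes a connected surface, and the Euler characteristic c(ρ) - |D|/2 + c(ρ∘ι) is at most 2, where c(σ) denotes the number of cycles (orbits) of σ. -/

import Mathlib

set_option linter.unusedSectionVars false
set_option maxHeartbeats 1000000

/-- The number of orbits (cycles, including fixed points) of a permutation. -/
noncomputable def permOrbitCount {D : Type*} (σ : Equiv.Perm D) : ℕ :=
  Nat.card (MulAction.orbitRel.Quotient (Subgroup.zpowers σ) D)

section Aux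

open Equiv MulAction Subgroup

/-- Generic counting lemma: if the setoid `t` is obtained from `s` by merging the
(distinct) classes of `a` and `b`, the number of classes drops by exactly one. -/
lemma card_quotient_merge {α : Type*} [Finite α] (s t : Setoid α) (a b : α)
    (hiff : ∀ x y, t x y ↔ (s x y ∨ (s x a ∧ s y b) ∨ (s x b ∧ s y a)))
    (hab : ¬ s a b) :
    Nat.card (Quotient s) = Nat.card (Quotient t) + 1 := by
  have himp : ∀ x y, s x y → t x y := fun x y h => (hiff x y).mpr (Or.inl h)
  let g : Quotient s → Quotient t := Quotient.map' id himp
  have hg : ∀ z : α, g (Quotient.mk'' z) = Quotient.mk'' z := fun z => rfl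
  let qa : Quotient s := Quotient.mk'' a
  let f : {q : Quotient s // q ≠ qa} → Quotient t := fun q => g q.1
  have hbij : Function.Bijective f := by
    constructor
    · rintro ⟨q1, h1⟩ ⟨q2, h2⟩ heq
      apply Subtype.ext
      show q1 = q2
      induction q1 using Quotient.inductionOn' with
      | h x =>
      induction q2 using Quotient.inductionOn' with
      | h y =>
      simp only [f, hg] at heq
      rcases (hiff x y).mp (Quotient.eq''.mp heq) with hxy | ⟨h1', _⟩ | ⟨_, h2'⟩
      · exact Quotient.sound' hxy
      · exact absurd (Quotient.sound' h1') h1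
      · exact absurd (Quotient.sound' h2') h2
    · intro q'
      induction q' using Quotient.inductionOn' with
      | h z =>
      by_cases hz : s z a
      · refine ⟨⟨Quotient.mk'' b, fun hc => hab (s.symm (Quotient.eq''.mp hc))⟩, ?_⟩
        show g (Quotient.mk'' b) = Quotient.mk'' z
        rw [hg]
        exact Quotient.sound' ((hiff b z).mpr (Or.inr (Or.inr ⟨s.refl b, hz⟩)))
      · exact ⟨⟨Quotient.mk'' z, fun hc => hz (Quotient.eq''.mp hc)⟩, rfl⟩
  have : DecidableEq (Quotient s) := Classical.decEq _
  have e1 : Quotient s ≃ Option {q : Quotient s // q ≠ qa} := (Equiv.optionSubtypeNe qa).symm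
  have : Fintype (Quotient s) := Fintype.ofFinite _
  have : Fintype (Quotient t) := Fintype.ofFinite _
  have : Fintype {q : Quotient s // q ≠ qa} := Fintype.ofFinite _
  calc Nat.card (Quotient s) = Nat.card (Option {q : Quotient s // q ≠ qa}) := Nat.card_congr e1
    _ = Nat.card {q : Quotient s // q ≠ qa} + 1 := by simp [Nat.card_eq_fintype_card]
    _ = Nat.card (Quotient t) + 1 := by rw [Nat.card_congr (Equiv.ofBijective f hbij)]

variable {D : Type*} [Fintype D] [DecidableEq D]

/-- orbit count of a subgroup of permutations -/
noncomputable def oc (G : Subgroup (Equiv.Perm D)) : ℕ :=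
  Nat.card (MulAction.orbitRel.Quotient G D)

lemma permOrbitCount_eq (σ : Equiv.Perm D) : permOrbitCount σ = oc (Subgroup.closure {σ}) := by
  unfold permOrbitCount oc
  rw [Subgroup.zpowers_eq_closure]

lemma oc_le_card (G : Subgroup (Equiv.Perm D)) : oc G ≤ Fintype.card D := by
  rw [← Nat.card_eq_fintype_card]
  exact Nat.card_le_card_of_surjective (Quotient.mk'') Quotient.mk''_surjective

/-- The relation `x` in the orbit of `y` under the subgroup generated by `S`. -/
def SRel (S : Set (Equiv.Perm D)) (x y : D) : Prop :=
  x ∈ MulAction.orbit (Subgroup.closure S) y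

lemma SRel.refl (S : Set (Equiv.Perm D)) (x : D) : SRel S x x := MulAction.mem_orbit_self x

lemma SRel.symm {S : Set (Equiv.Perm D)} {x y : D} (h : SRel S x y) : SRel S y x :=
  (MulAction.orbitRel (Subgroup.closure S) D).symm h

lemma SRel.trans {S : Set (Equiv.Perm D)} {x y z : D} (h : SRel S x y) (h' : SRel S y z) :
    SRel S x z :=
  (MulAction.orbitRel (Subgroup.closure S) D).trans h h'

lemma SRel.of_subset {S T : Set (Equiv.Perm D)} (hST : S ⊆ T) {x y : D} (h : SRel S x y) :
    SRel T x y := by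
  obtain ⟨⟨g, hg⟩, rfl⟩ := h
  exact ⟨⟨g, Subgroup.closure_mono hST hg⟩, rfl⟩

lemma srel_apply {S : Set (Equiv.Perm D)} {g : Equiv.Perm D} (hg : g ∈ Subgroup.closure S)
    (x : D) : SRel S (g x) x :=
  ⟨⟨g, hg⟩, rfl⟩

/-- The "merged" relation. -/
def MRel (S : Set (Equiv.Perm D)) (a b : D) (x y : D) : Prop :=
  SRel S x y ∨ (SRel S x a ∧ SRel S y b) ∨ (SRel S x b ∧ SRel S y a)

lemma MRel.refl (S : Set (Equiv.Perm D)) (a b x : D) : MRel S a b x x := Or.inl (SRel.refl S x)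

lemma MRel.symm {S : Set (Equiv.Perm D)} {a b x y : D} (h : MRel S a b x y) : MRel S a b y x := by
  rcases h with h | ⟨h1, h2⟩ | ⟨h1, h2⟩
  · exact Or.inl h.symm
  · exact Or.inr (Or.inr ⟨h2, h1⟩)
  · exact Or.inr (Or.inl ⟨h2, h1⟩)

lemma MRel.trans {S : Set (Equiv.Perm D)} {a b x y z : D} (h : MRel S a b x y)
    (h' : MRel S a b y z) : MRel S a b x z := by
  rcases h with h | ⟨h1, h2⟩ | ⟨h1, h2⟩ <;> rcases h' with h' | ⟨h1', h2'⟩ | ⟨h1', h2'⟩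
  · exact Or.inl (h.trans h')
  · exact Or.inr (Or.inl ⟨h.trans h1', h2'⟩)
  · exact Or.inr (Or.inr ⟨h.trans h1', h2'⟩)
  · exact Or.inr (Or.inl ⟨h1, h'.symm.trans h2⟩)
  · exact Or.inr (Or.inl ⟨h1, h2'⟩)
  · exact Or.inl (h1.trans h2'.symm)
  · exact Or.inr (Or.inr ⟨h1, h'.symm.trans h2⟩)
  · exact Or.inl (h1.trans h2'.symm)
  · exact Or.inr (Or.inr ⟨h1, h2'⟩)

/-- Key lemma: the orbit relation of the subgroup generated by `insert (swap a b) S`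
is the relation of `S` with the classes of `a` and `b` merged. -/
lemma srel_insert_swap_iff {S : Set (Equiv.Perm D)} {a b x y : D} :
    SRel (insert (Equiv.swap a b) S) x y ↔ MRel S a b x y := by
  have key : ∀ g ∈ Subgroup.closure (insert (Equiv.swap a b) S), ∀ y, MRel S a b (g y) y := by
    intro g hg
    induction hg using Subgroup.closure_induction with
    | mem s hs =>
      intro y
      rcases hs with rfl | hs
      · rcases eq_or_ne y a with rfl | hya
        · rw [Equiv.swap_apply_left]
          exact Or.inr (Or.inr ⟨SRel.refl S b, SRel.refl S y⟩)
        rcases eq_or_ne y b with rfl | hyb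
        · rw [Equiv.swap_apply_right]
          exact Or.inr (Or.inl ⟨SRel.refl S a, SRel.refl S y⟩)
        · rw [Equiv.swap_apply_of_ne_of_ne hya hyb]
          exact MRel.refl S a b y
      · left
        exact srel_apply (Subgroup.subset_closure hs) y
    | one => exact fun y => MRel.refl S a b y
    | mul g h hg hh ihg ihh =>
      intro y
      have := (ihg (h y)).trans (ihh y)
      simpa using this
    | inv g hg ihg =>
      intro y
      have := (ihg (g⁻¹ y)).symm
      simpa using this
  constructor
  · rintro ⟨⟨g, hg⟩, rfl⟩
    exact key g hg y
  · intro h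
    have hsub : ∀ u v : D, SRel S u v → SRel (insert (Equiv.swap a b) S) u v :=
      fun u v huv => huv.of_subset (Set.subset_insert _ _)
    have hba : SRel (insert (Equiv.swap a b) S) b a := by
      have := srel_apply (S := insert (Equiv.swap a b) S)
        (Subgroup.subset_closure (Set.mem_insert _ _)) a
      rwa [Equiv.swap_apply_left] at this
    rcases h with h | ⟨h1, h2⟩ | ⟨h1, h2⟩
    · exact hsub _ _ h
    · exact ((hsub _ _ h1).trans hba.symm).trans (hsub _ _ h2).symm
    · exact ((hsub _ _ h1).trans hba).trans (hsub _ _ h2).symm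

lemma orbitRel_closure_apply (S : Set (Equiv.Perm D)) (x y : D) :
    MulAction.orbitRel (Subgroup.closure S) D x y ↔ SRel S x y := Iff.rfl

lemma oc_insert_swap_of_srel {S : Set (Equiv.Perm D)} {a b : D} (h : SRel S a b) :
    oc (Subgroup.closure (insert (Equiv.swap a b) S)) = oc (Subgroup.closure S) := by
  have hset : MulAction.orbitRel (Subgroup.closure (insert (Equiv.swap a b) S)) D
      = MulAction.orbitRel (Subgroup.closure S) D := by
    apply Setoid.ext
    intro x y
    rw [orbitRel_closure_apply, orbitRel_closure_apply, srel_insert_swap_iff]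
    constructor
    · rintro (hxy | ⟨h1, h2⟩ | ⟨h1, h2⟩)
      · exact hxy
      · exact (h1.trans h) |>.trans h2.symm
      · exact (h1.trans h.symm) |>.trans h2.symm
    · exact fun hxy => Or.inl hxy
  show Nat.card (Quotient _) = Nat.card (Quotient _)
  exact congrArg (fun s => Nat.card (Quotient s)) hset

lemma oc_insert_swap_of_not_srel {S : Set (Equiv.Perm D)} {a b : D} (h : ¬ SRel S a b) :
    oc (Subgroup.closure S) = oc (Subgroup.closure (insert (Equiv.swap a b) S)) + 1 := by
  exact card_quotient_merge (MulAction.orbitRel (Subgroup.closure S) D)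
    (MulAction.orbitRel (Subgroup.closure (insert (Equiv.swap a b) S)) D) a b
    (fun x y => srel_insert_swap_iff) h

/-- `SRel` for a single permutation is `SameCycle`. -/
lemma srel_singleton_iff {σ : Equiv.Perm D} {x y : D} :
    SRel {σ} x y ↔ σ.SameCycle x y := by
  constructor
  · rintro ⟨⟨g, hg⟩, rfl⟩
    rw [← Subgroup.zpowers_eq_closure] at hg
    obtain ⟨k, rfl⟩ := hg
    exact (Equiv.Perm.SameCycle.symm ⟨k, rfl⟩)
  · rintro ⟨k, hk⟩
    have h1 : SRel {σ} ((σ ^ (-k)) y) y := by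
      refine srel_apply ?_ y
      rw [← Subgroup.zpowers_eq_closure]
      exact zpow_mem (Subgroup.mem_zpowers σ) (-k)
    have h2 : (σ ^ (-k)) y = x := by
      rw [← hk, zpow_neg]
      exact Equiv.symm_apply_apply _ _
    rwa [h2] at h1


/-- Multiplying by a transposition of two points in different cycles merges the cycles. -/
lemma sameCycle_mul_swap {σ : Equiv.Perm D} {a b : D} (hab : a ≠ b)
    (h : ¬ σ.SameCycle a b) : (σ * Equiv.swap a b).SameCycle a b := by
  set t := Equiv.swap a b with ht
  have hper : Function.IsPeriodicPt σ (orderOf σ) a := by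
    have : (σ : Equiv.Perm D) ^ orderOf σ = 1 := pow_orderOf_eq_one σ
    show (⇑σ)^[orderOf σ] a = a
    rw [Equiv.Perm.iterate_eq_pow, this]
    rfl
  set m := Function.minimalPeriod (⇑σ) a with hm
  have hm0 : 0 < m := hper.minimalPeriod_pos (orderOf_pos σ)
  have hfix : (σ ^ m) a = a := by
    have := Function.iterate_minimalPeriod (f := ⇑σ) (x := a)
    rwa [Equiv.Perm.iterate_eq_pow] at this
  have hlt : ∀ k, 0 < k → k < m → (σ ^ k) a ≠ a := by
    intro k hk hkm hc
    have : Function.IsPeriodicPt (⇑σ) k a := by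
      show (⇑σ)^[k] a = a
      rwa [Equiv.Perm.iterate_eq_pow]
    exact Function.not_isPeriodicPt_of_pos_of_lt_minimalPeriod (Nat.pos_iff_ne_zero.mp hk) hkm this
  have hnotb : ∀ k : ℕ, (σ ^ k) a ≠ b := by
    intro k hc
    exact h ⟨(k : ℤ), by rw [zpow_natCast]; exact hc⟩
  have key : ∀ k, 1 ≤ k → k ≤ m → ((σ * t) ^ k) b = (σ ^ k) a := by
    intro k
    induction k with
    | zero => omega
    | succ n ih =>
      intro _ hsm
      rcases Nat.eq_zero_or_pos n with rfl | hn
      · rw [pow_one, Equiv.Perm.mul_apply, ht, Equiv.swap_apply_right, pow_one]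
      · have hnm : n < m := by omega
        rw [pow_succ', Equiv.Perm.mul_apply, ih hn (le_of_lt hnm)]
        rw [Equiv.Perm.mul_apply]
        rw [ht, Equiv.swap_apply_of_ne_of_ne (hlt n hn hnm) (hnotb n)]
        rw [← Equiv.Perm.mul_apply, ← pow_succ']
  have hend : ((σ * t) ^ m) b = a := by rw [key m hm0 (le_refl m), hfix]
  exact (Equiv.Perm.SameCycle.symm ⟨(m : ℤ), by rw [zpow_natCast]; exact hend⟩)

/-- moving generators across a transposition -/
lemma closure_insert_swap_eq {a b : D} (S S' : Set (Equiv.Perm D))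
    (h1 : ∀ g ∈ S, g ∈ Subgroup.closure (insert (Equiv.swap a b) S'))
    (h2 : ∀ g ∈ S', g ∈ Subgroup.closure (insert (Equiv.swap a b) S)) :
    Subgroup.closure (insert (Equiv.swap a b) S) = Subgroup.closure (insert (Equiv.swap a b) S') := by
  apply le_antisymm <;> rw [Subgroup.closure_le] <;> rintro g (rfl | hg)
  · exact Subgroup.subset_closure (Set.mem_insert _ _)
  · exact h1 g hg
  · exact Subgroup.subset_closure (Set.mem_insert _ _)
  · exact h2 g hg

theorem genus_ineq (σ τ : Equiv.Perm D) :
    oc (Subgroup.closure {σ}) + oc (Subgroup.closure {τ}) + oc (Subgroup.closure {σ * τ})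
      ≤ Fintype.card D + 2 * oc (Subgroup.closure {σ, τ}) := by
  generalize hk : τ.support.card = k
  induction k using Nat.strong_induction_on generalizing σ τ with
  | _ k IH =>
  by_cases hτ : τ = 1
  · subst hτ
    have hpair : Subgroup.closure ({σ, 1} : Set (Equiv.Perm D)) = Subgroup.closure {σ} := by
      apply le_antisymm <;> rw [Subgroup.closure_le]
      · rintro g (rfl | rfl)
        · exact Subgroup.subset_closure rfl
        · exact one_mem _
      · rintro g rfl
        exact Subgroup.subset_closure (Set.mem_insert _ _)
    rw [mul_one, hpair]
    have := oc_le_card (Subgroup.closure {(1 : Equiv.Perm D)})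
    omega
  · have hex : ∃ a, τ a ≠ a := by
      by_contra hc; push_neg at hc; exact hτ (Equiv.ext hc)
    obtain ⟨a, ha⟩ := hex
    have hab : a ≠ τ a := fun e => ha e.symm
    set b := τ a with hb
    have htt : Equiv.swap a b * Equiv.swap a b = 1 := Equiv.swap_mul_self a b
    have hτeq : Equiv.swap a b * (Equiv.swap a b * τ) = τ := by
      rw [← mul_assoc, htt, one_mul]
    have hσeq : (σ * Equiv.swap a b) * Equiv.swap a b = σ := by
      rw [mul_assoc, htt, mul_one]
    have hmul : (σ * Equiv.swap a b) * (Equiv.swap a b * τ) = σ * τ := by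
      rw [mul_assoc, ← mul_assoc (Equiv.swap a b) (Equiv.swap a b) τ, htt, one_mul]
    have hcard : (Equiv.swap a b * τ).support.card < k := by
      rw [← hk, hb]
      exact Equiv.Perm.card_support_swap_mul ha
    -- τ-side
    have hτa : (Equiv.swap a b * τ) a = a := by
      rw [Equiv.Perm.mul_apply, ← hb, Equiv.swap_apply_right]
    have hτba : SRel {τ} b a := by
      have := srel_apply (S := {τ}) (Subgroup.subset_closure rfl) a
      rwa [← hb] at this
    have hnotτ' : ¬ SRel {Equiv.swap a b * τ} a b := by
      rw [srel_singleton_iff]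
      rintro ⟨i, hi⟩
      rw [Equiv.Perm.zpow_apply_eq_self_of_apply_eq_self hτa i] at hi
      exact hab hi
    have idτ : Subgroup.closure (insert (Equiv.swap a b) {τ})
        = Subgroup.closure (insert (Equiv.swap a b) {Equiv.swap a b * τ}) := by
      apply closure_insert_swap_eq
      · rintro g rfl
        have hm : Equiv.swap a b * (Equiv.swap a b * g)
            ∈ Subgroup.closure (insert (Equiv.swap a b) {Equiv.swap a b * g}) :=
          mul_mem (Subgroup.subset_closure (Set.mem_insert _ _))
            (Subgroup.subset_closure (Set.mem_insert_of_mem _ rfl))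
        rwa [hτeq] at hm
      · rintro g rfl
        exact mul_mem (Subgroup.subset_closure (Set.mem_insert _ _))
          (Subgroup.subset_closure (Set.mem_insert_of_mem _ rfl))
    have hcτ : oc (Subgroup.closure {Equiv.swap a b * τ}) = oc (Subgroup.closure {τ}) + 1 := by
      rw [oc_insert_swap_of_not_srel hnotτ', ← idτ, oc_insert_swap_of_srel hτba.symm]
    -- σ-side
    have idσ : Subgroup.closure (insert (Equiv.swap a b) {σ})
        = Subgroup.closure (insert (Equiv.swap a b) {σ * Equiv.swap a b}) := by
      apply closure_insert_swap_eq
      · rintro g rfl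
        have hm : (g * Equiv.swap a b) * Equiv.swap a b
            ∈ Subgroup.closure (insert (Equiv.swap a b) {g * Equiv.swap a b}) :=
          mul_mem (Subgroup.subset_closure (Set.mem_insert_of_mem _ rfl))
            (Subgroup.subset_closure (Set.mem_insert _ _))
        rwa [hσeq] at hm
      · rintro g rfl
        exact mul_mem (Subgroup.subset_closure (Set.mem_insert_of_mem _ rfl))
          (Subgroup.subset_closure (Set.mem_insert _ _))
    have hcσ_le : oc (Subgroup.closure {σ})
        ≤ oc (Subgroup.closure (insert (Equiv.swap a b) {σ})) + 1 := by
      by_cases hσab : SRel {σ} a b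
      · rw [oc_insert_swap_of_srel hσab]
        omega
      · exact le_of_eq (oc_insert_swap_of_not_srel hσab)
    have hins_le : oc (Subgroup.closure (insert (Equiv.swap a b) {σ * Equiv.swap a b}))
        ≤ oc (Subgroup.closure {σ * Equiv.swap a b}) := by
      by_cases hσ'ab : SRel {σ * Equiv.swap a b} a b
      · exact le_of_eq (oc_insert_swap_of_srel hσ'ab)
      · rw [oc_insert_swap_of_not_srel hσ'ab]
        omega
    -- pair-side
    have hG2ba : SRel {σ, τ} b a := by
      have := srel_apply (S := {σ, τ})
        (Subgroup.subset_closure (Set.mem_insert_of_mem _ rfl)) a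
      rwa [← hb] at this
    have hA : oc (Subgroup.closure (insert (Equiv.swap a b) {σ, τ}))
        = oc (Subgroup.closure {σ, τ}) := oc_insert_swap_of_srel hG2ba.symm
    have idG : Subgroup.closure (insert (Equiv.swap a b) {σ, τ})
        = Subgroup.closure (insert (Equiv.swap a b) {σ * Equiv.swap a b, Equiv.swap a b * τ}) := by
      apply closure_insert_swap_eq
      · rintro g (rfl | rfl)
        · have hm : (g * Equiv.swap a b) * Equiv.swap a b ∈ Subgroup.closure
              (insert (Equiv.swap a b) {g * Equiv.swap a b, Equiv.swap a b * τ}) :=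
            mul_mem
              (Subgroup.subset_closure (Set.mem_insert_of_mem _ (Set.mem_insert _ _)))
              (Subgroup.subset_closure (Set.mem_insert _ _))
          rwa [hσeq] at hm
        · have hm : Equiv.swap a b * (Equiv.swap a b * g) ∈ Subgroup.closure
              (insert (Equiv.swap a b) {σ * Equiv.swap a b, Equiv.swap a b * g}) :=
            mul_mem (Subgroup.subset_closure (Set.mem_insert _ _))
              (Subgroup.subset_closure (Set.mem_insert_of_mem _ (Set.mem_insert_of_mem _ rfl)))
          rwa [hτeq] at hm
      · rintro g (rfl | rfl)
        · exact mul_mem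
            (Subgroup.subset_closure (Set.mem_insert_of_mem _ (Set.mem_insert _ _)))
            (Subgroup.subset_closure (Set.mem_insert _ _))
        · exact mul_mem (Subgroup.subset_closure (Set.mem_insert _ _))
            (Subgroup.subset_closure (Set.mem_insert_of_mem _ (Set.mem_insert_of_mem _ rfl)))
    have IH' := IH _ hcard (σ * Equiv.swap a b) (Equiv.swap a b * τ) rfl
    rw [hmul] at IH'
    by_cases hq : SRel {σ * Equiv.swap a b, Equiv.swap a b * τ} a b
    · have hins : oc (Subgroup.closure (insert (Equiv.swap a b)
          {σ * Equiv.swap a b, Equiv.swap a b * τ}))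
          = oc (Subgroup.closure {σ * Equiv.swap a b, Equiv.swap a b * τ}) :=
        oc_insert_swap_of_srel hq
      have hG2 : oc (Subgroup.closure {σ * Equiv.swap a b, Equiv.swap a b * τ})
          = oc (Subgroup.closure {σ, τ}) := by rw [← hins, ← idG, hA]
      rw [idσ] at hcσ_le
      omega
    · have hG2 : oc (Subgroup.closure {σ * Equiv.swap a b, Equiv.swap a b * τ})
          = oc (Subgroup.closure {σ, τ}) + 1 := by
        rw [oc_insert_swap_of_not_srel hq, ← idG, hA]
      have hnotσ' : ¬ SRel {σ * Equiv.swap a b} a b := fun hc =>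
        hq (hc.of_subset (Set.singleton_subset_iff.mpr (Set.mem_insert _ _)))
      have hσab : SRel {σ} a b := by
        by_contra hc
        apply hnotσ'
        rw [srel_singleton_iff] at hc ⊢
        exact sameCycle_mul_swap hab hc
      have hσ'eq : oc (Subgroup.closure {σ * Equiv.swap a b})
          = oc (Subgroup.closure {σ}) + 1 := by
        rw [oc_insert_swap_of_not_srel hnotσ', ← idσ, oc_insert_swap_of_srel hσab]
      omega

lemma card_eq_two_mul_permOrbitCount {ι : Equiv.Perm D} (hfree : ∀ d, ι d ≠ d)
    (hinv : ι * ι = 1) : Fintype.card D = 2 * permOrbitCount ι := by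
  classical
  have hii : ∀ z, ι (ι z) = z := by
    intro z
    have := congrArg (fun f : Equiv.Perm D => f z) hinv
    simpa using this
  have hpow : ∀ g ∈ Subgroup.zpowers ι, g = 1 ∨ g = ι := by
    rintro g ⟨k, rfl⟩
    have h2 : ι ^ (2 : ℤ) = 1 := by
      rw [show (2 : ℤ) = ((2 : ℕ) : ℤ) by norm_num, zpow_natCast, pow_two]
      exact hinv
    rcases Int.even_or_odd k with ⟨j, hj⟩ | ⟨j, hj⟩
    · left
      show (ι : Equiv.Perm D) ^ k = 1
      rw [show (ι : Equiv.Perm D) ^ k = (ι ^ (2 : ℤ)) ^ j from by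
        rw [← zpow_mul, two_mul, ← hj], h2, one_zpow]
    · right
      show (ι : Equiv.Perm D) ^ k = ι
      rw [show (ι : Equiv.Perm D) ^ k = (ι ^ (2 : ℤ)) ^ j * ι ^ (1 : ℤ) from by
        rw [← zpow_mul, ← zpow_add, ← hj], h2, one_zpow, one_mul, zpow_one]
  have hrel : ∀ x y : D, (MulAction.orbitRel (Subgroup.zpowers ι) D) x y ↔
      (x = y ∨ x = ι y) := by
    intro x y
    constructor
    · rintro ⟨⟨g, hg⟩, rfl⟩
      rcases hpow g hg with rfl | rfl
      · left; rfl
      · right; rfl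
    · rintro (rfl | rfl)
      · exact (MulAction.orbitRel (Subgroup.zpowers ι) D).refl x
      · exact ⟨⟨ι, Subgroup.mem_zpowers ι⟩, rfl⟩
  set Q := MulAction.orbitRel.Quotient (Subgroup.zpowers ι) D with hQ
  have hout : ∀ q : Q, (Quotient.mk'' (Quotient.out q) : Q) = q := fun q => Quotient.out_eq' q
  let φ : Q × Bool → D := fun p => if p.2 then p.1.out else ι p.1.out
  have hbij : Function.Bijective φ := by
    constructor
    · rintro ⟨q1, b1⟩ ⟨q2, b2⟩ heq
      have hqeq : ∀ x y : D, (Quotient.mk'' x : Q) = Quotient.mk'' y ↔ (x = y ∨ x = ι y) :=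
        fun x y => Quotient.eq''.trans (hrel x y)
      cases b1 <;> cases b2 <;> simp only [φ, if_true, if_false, Bool.false_eq_true] at heq
      · have : q1 = q2 := by
          rw [← hout q1, ← hout q2]
          exact congrArg Quotient.mk'' (ι.injective heq)
        rw [this]
      · -- ι q1.out = q2.out
        have h12 : q1 = q2 := by
          rw [← hout q1, ← hout q2]
          exact (hqeq _ _).mpr (Or.inr (by rw [← heq, hii]))
        exfalso
        rw [h12] at heq
        exact hfree q2.out heq
      · have h12 : q1 = q2 := by
          rw [← hout q1, ← hout q2]
          exact (hqeq _ _).mpr (Or.inr heq)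
        exfalso
        rw [h12] at heq
        exact hfree q2.out heq.symm
      · have : q1 = q2 := by
          rw [← hout q1, ← hout q2]
          exact congrArg Quotient.mk'' heq
        rw [this]
    · intro x
      have hrx : (Quotient.mk'' (Quotient.out (Quotient.mk'' x : Q)) : Q) = Quotient.mk'' x :=
        hout _
      rcases (hrel _ _).mp (Quotient.eq''.mp hrx) with h | h
      · exact ⟨⟨Quotient.mk'' x, true⟩, h⟩
      · refine ⟨⟨Quotient.mk'' x, false⟩, ?_⟩
        show ι (Quotient.out (Quotient.mk'' x : Q)) = x
        rw [h, hii]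
  have hcard : Nat.card D = Nat.card (Q × Bool) := (Nat.card_congr (Equiv.ofBijective φ hbij)).symm
  rw [Nat.card_eq_fintype_card] at hcard
  rw [hcard, Nat.card_prod]
  have : Nat.card Bool = 2 := by simp [Nat.card_eq_fintype_card]
  rw [this]
  rw [permOrbitCount]
  ring

lemma oc_eq_one_of_trans {G : Subgroup (Equiv.Perm D)} [Nonempty D]
    (h : ∀ a b : D, b ∈ MulAction.orbit G a) : oc G = 1 := by
  rw [oc, Nat.card_eq_one_iff_unique]
  refine ⟨⟨fun q1 q2 => ?_⟩, ⟨Quotient.mk'' (Classical.arbitrary D)⟩⟩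
  induction q1 using Quotient.inductionOn' with
  | h x =>
  induction q2 using Quotient.inductionOn' with
  | h y =>
  exact Quotient.sound' (h y x)

end Aux

/-- Let `ρ` and `ι` be permutations of a finite set `D` with `ι` a
fixed-point-free involution.  If the group generated by `ρ` and `ι` acts
transitively on `D` (i.e. the combinatorial map `(D, ρ, ι)` encodes a
connected surface), then the Euler characteristic
`c(ρ) - |D|/2 + c(ρ∘ι)` is at most `2`, where `c(σ)` is the number of cycles
(orbits) of `σ`. -/
theorem combinatorial_map_euler_char_le_two {D : Type*} [Fintype D]
    [DecidableEq D] (ρ ι : Equiv.Perm D)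
    (hfree : ∀ d, ι d ≠ d) (hinv : ι * ι = 1)
    (htrans : ∀ a b : D, b ∈ MulAction.orbit
      (Subgroup.closure {ρ, ι} : Subgroup (Equiv.Perm D)) a) :
    (permOrbitCount ρ : ℤ) - (Fintype.card D : ℤ) / 2 +
      (permOrbitCount (ρ * ι) : ℤ) ≤ 2 := by
  rcases isEmpty_or_nonempty D with hD | hD
  · have h0 : Fintype.card D = 0 := Fintype.card_eq_zero
    have hq : ∀ σ : Equiv.Perm D, permOrbitCount σ = 0 := by
      intro σ
      have : IsEmpty (MulAction.orbitRel.Quotient (Subgroup.zpowers σ) D) :=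
        ⟨fun q => Quotient.inductionOn' q (fun x => isEmptyElim x)⟩
      exact Nat.card_of_isEmpty
    rw [hq, hq, h0]
    norm_num
  · have h1 := genus_ineq ρ ι
    rw [← permOrbitCount_eq, ← permOrbitCount_eq, ← permOrbitCount_eq] at h1
    have h2 : oc (Subgroup.closure {ρ, ι}) = 1 := oc_eq_one_of_trans htrans
    have h3 : Fintype.card D = 2 * permOrbitCount ι := card_eq_two_mul_permOrbitCount hfree hinv
    rw [h2] at h1
    omega
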